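/- Theorem A.2 (polyhedral separation on the probability hyperplane): Let n ≥ 1 and let X₁ = {x ∈ ℝⁿ : Σ_{i=1}^n x_i = 1}. Let A_1, …, A_k be nonempty subsets of X₁, each of which is a polyhedron, i.e. an intersection of finitely many closed half-spaces of ℝⁿ. Then ⋂_{i=1}^k A_i = ∅ if and only if there exist vectors p_1, …, p_k ∈ ℝⁿ with Σ_{i=1}^k p_i = 0 such that p_i · x > 0 for every i ∈ {1,…,k} and every x ∈ A_i. -/

import Mathlib

open Finset

noncomputable section

/-- A polyhedron in ℝⁿ: an intersection of finitely many closed half-spaces. -/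
def IsPolyhedron {n : ℕ} (A : Set (Fin n → ℝ)) : Prop :=
  ∃ (m : ℕ) (a : Fin m → Fin n → ℝ) (c : Fin m → ℝ),
    A = {x | ∀ t, (∑ i, a t i * x i) ≤ c t}

section Aux

variable {E : Type*} [NormedAddCommGroup E] [NormedSpace ℝ E] [FiniteDimensional ℝ E]
variable {ι : Type*} [Fintype ι] {d : Type*} [Fintype d]

/-- Carathéodory for cones: any nonnegative combination can be rewritten with
linearly independent support. -/
lemma cone_caratheodory (v : ι → E) :
    ∀ (N : ℕ) (s : Finset ι) (_ : s.card ≤ N) (l : ι → ℝ),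
      (∀ j, 0 ≤ l j) → (∀ j ∉ s, l j = 0) →
      ∃ (t : Finset ι) (l' : ι → ℝ), LinearIndependent ℝ (fun j : t => v j) ∧
        (∀ j, 0 ≤ l' j) ∧ (∀ j ∉ t, l' j = 0) ∧ ∑ j, l' j • v j = ∑ j, l j • v j := by
  intro N
  induction N with
  | zero =>
    intro s hs l hl hsupp
    refine ⟨∅, l, ?_, hl, ?_, rfl⟩
    · have : IsEmpty ((∅ : Finset ι) : Set ι) := by simp
      exact linearIndependent_empty_type
    · intro j _
      exact hsupp j (by simpa [Finset.card_eq_zero.mp (Nat.le_zero.mp hs)] using Finset.not_mem_empty j)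
  | succ N ih =>
    intro s hs l hl hsupp
    by_cases hLI : LinearIndependent ℝ (fun j : s => v j)
    · exact ⟨s, l, hLI, hl, hsupp, rfl⟩
    · obtain ⟨g, hg0, i0, hgi0⟩ := Fintype.not_linearIndependent_iff.mp hLI
      classical
      -- extend g to ι by zero
      set G : ι → ℝ := fun j => if h : j ∈ s then g ⟨j, h⟩ else 0 with hG
      have hGsum : ∑ j, G j • v j = 0 := by
        rw [← Finset.sum_subset (Finset.subset_univ s) (by intro j _ hj; simp [hG, hj])]
        rw [← Finset.sum_attach s (fun j => G j • v j)]
        simpa [hG] using hg0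
      have hGsupp : ∀ j ∉ s, G j = 0 := by intro j hj; simp [hG, hj]
      -- pick h = G or -G such that some value on s is positive
      obtain ⟨H, hHsum, hHsupp, ⟨j1, hj1s, hj1pos⟩⟩ :
          ∃ H : ι → ℝ, (∑ j, H j • v j = 0) ∧ (∀ j ∉ s, H j = 0) ∧ ∃ j ∈ s, 0 < H j := by
        rcases lt_trichotomy (g i0) 0 with h | h | h
        · exact ⟨-G, by simpa using hGsum, fun j hj => by simp [hGsupp j hj],
            i0, i0.2, by simp [hG, i0.2]; linarith⟩
        · exact absurd h hgi0
        · exact ⟨G, hGsum, hGsupp, i0, i0.2, by simp [hG, i0.2]; exact h⟩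
      set T := s.filter (fun j => 0 < H j) with hT
      have hTne : T.Nonempty := ⟨j1, by simp [hT, hj1s, hj1pos]⟩
      obtain ⟨j0, hj0T, hj0min⟩ := Finset.exists_min_image T (fun j => l j / H j) hTne
      have hj0s : j0 ∈ s := (Finset.mem_filter.mp hj0T).1
      have hHj0 : 0 < H j0 := (Finset.mem_filter.mp hj0T).2
      set c : ℝ := l j0 / H j0 with hc
      have hc0 : 0 ≤ c := div_nonneg (hl j0) hHj0.le
      set l2 : ι → ℝ := fun j => l j - c * H j with hl2
      have hl2nonneg : ∀ j, 0 ≤ l2 j := by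
        intro j
        by_cases hjs : j ∈ s
        · by_cases hHj : 0 < H j
          · have hjT : j ∈ T := Finset.mem_filter.mpr ⟨hjs, hHj⟩
            have := hj0min j hjT
            have : c * H j ≤ l j := by
              rw [hc]
              calc (l j0 / H j0) * H j ≤ (l j / H j) * H j := by
                    exact mul_le_mul_of_nonneg_right this hHj.le
                _ = l j := div_mul_cancel₀ _ (ne_of_gt hHj)
            simp [hl2]; linarith
          · push_neg at hHj
            have : c * H j ≤ 0 := mul_nonpos_of_nonneg_of_nonpos hc0 hHj
            have := hl j
            simp [hl2]; linarith
        · simp [hl2, hsupp j hjs, hHsupp j hjs]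
      have hl2j0 : l2 j0 = 0 := by
        simp [hl2, hc, div_mul_cancel₀ _ (ne_of_gt hHj0)]
      have hl2supp : ∀ j ∉ s.erase j0, l2 j = 0 := by
        intro j hj
        rw [Finset.mem_erase] at hj
        push_neg at hj
        by_cases hjs : j ∈ s
        · have hje : j = j0 := by
            by_contra h
            exact (hj h) hjs
          rw [hje]; exact hl2j0
        · simp [hl2, hsupp j hjs, hHsupp j hjs]
      have hl2sum : ∑ j, l2 j • v j = ∑ j, l j • v j := by
        simp only [hl2, sub_smul, Finset.sum_sub_distrib, mul_smul]
        rw [← Finset.smul_sum, hHsum, smul_zero, sub_zero]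
      have hcard : (s.erase j0).card ≤ N := by
        have := Finset.card_erase_of_mem hj0s
        omega
      obtain ⟨t, l', h1, h2, h3, h4⟩ := ih (s.erase j0) hcard l2 hl2nonneg hl2supp
      exact ⟨t, l', h1, h2, h3, by rw [h4, hl2sum]⟩

/-- The cone generated by a linearly independent finite family, as an image set, is closed. -/
lemma li_cone_closed (s : Finset ι) (v : ι → E)
    (hLI : LinearIndependent ℝ (fun j : s => v j)) :
    IsClosed {x : E | ∃ l : s → ℝ, (∀ j, 0 ≤ l j) ∧ x = ∑ j, l j • v j} := by
  classical
  let T : (s → ℝ) →ₗ[ℝ] E :=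
    { toFun := fun l => ∑ j, l j • v (j : ι)
      map_add' := by intro a b; simp [add_smul, Finset.sum_add_distrib]
      map_smul' := by intro r a; simp [smul_smul, Finset.smul_sum] }
  have hker : LinearMap.ker T = ⊥ := by
    rw [LinearMap.ker_eq_bot']
    intro l hl
    exact funext (Fintype.linearIndependent_iff.mp hLI l hl)
  have hemb := LinearMap.isClosedEmbedding_of_injective (𝕜 := ℝ) (f := T) hker
  have hset : {x : E | ∃ l : s → ℝ, (∀ j, 0 ≤ l j) ∧ x = ∑ j, l j • v j}
      = T '' {l : s → ℝ | ∀ j, 0 ≤ l j} := by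
    ext x
    constructor
    · rintro ⟨l, hl, rfl⟩; exact ⟨l, hl, rfl⟩
    · rintro ⟨l, hl, rfl⟩; exact ⟨l, hl, rfl⟩
  rw [hset]
  apply hemb.isClosedMap
  have : {l : s → ℝ | ∀ j, 0 ≤ l j} = ⋂ j, {l : s → ℝ | 0 ≤ l j} := by
    ext l; simp [Set.mem_iInter]
  rw [this]
  exact isClosed_iInter (fun j => isClosed_le continuous_const (continuous_apply j))

lemma cone_caratheodory' (v : ι → E) (l : ι → ℝ) (hl : ∀ j, 0 ≤ l j) :
      ∃ (t : Finset ι) (l' : ι → ℝ), LinearIndependent ℝ (fun j : t => v j) ∧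
        (∀ j, 0 ≤ l' j) ∧ (∀ j ∉ t, l' j = 0) ∧ ∑ j, l' j • v j = ∑ j, l j • v j :=
  cone_caratheodory v (Finset.univ.card) Finset.univ le_rfl l hl (by simp)

/-- The cone generated by a finite family is closed. -/
lemma fg_cone_closed (v : ι → E) :
    IsClosed {x : E | ∃ l : ι → ℝ, (∀ j, 0 ≤ l j) ∧ x = ∑ j, l j • v j} := by
  classical
  have key : {x : E | ∃ l : ι → ℝ, (∀ j, 0 ≤ l j) ∧ x = ∑ j, l j • v j}
      = ⋃ s : Finset ι,
        (if LinearIndependent ℝ (fun j : s => v j) then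
          {x : E | ∃ l : s → ℝ, (∀ j, 0 ≤ l j) ∧ x = ∑ j, l j • v j} else ∅) := by
    ext x
    simp only [Set.mem_iUnion, Set.mem_setOf_eq]
    constructor
    · rintro ⟨l, hl, rfl⟩
      obtain ⟨t, l', hLI, h2, h3, h4⟩ := cone_caratheodory' v l hl
      refine ⟨t, ?_⟩
      rw [if_pos hLI]
      refine ⟨fun j => l' j, fun j => h2 j, ?_⟩
      rw [← h4]
      rw [← Finset.sum_subset (Finset.subset_univ t) (by intro j _ hj; simp [h3 j hj])]
      rw [← Finset.sum_attach t (fun j => l' j • v j)]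
      rfl
    · rintro ⟨s, hx⟩
      by_cases hLI : LinearIndependent ℝ (fun j : s => v j)
      · rw [if_pos hLI] at hx
        obtain ⟨l, hl, rfl⟩ := hx
        refine ⟨fun j => if h : j ∈ s then l ⟨j, h⟩ else 0,
          fun j => by by_cases h : j ∈ s <;> simp [h, hl], ?_⟩
        rw [← Finset.sum_subset (Finset.subset_univ s) (by intro j _ hj; simp [hj])]
        rw [← Finset.sum_attach s (fun j => (if h : j ∈ s then l ⟨j, h⟩ else 0) • v j)]
        apply Finset.sum_congr rfl
        intro j _
        simp [j.2]
      · rw [if_neg hLI] at hx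
        exact absurd hx (Set.notMem_empty x)
  rw [key]
  apply isClosed_iUnion_of_finite
  intro s
  by_cases hLI : LinearIndependent ℝ (fun j : s => v j)
  · rw [if_pos hLI]; exact li_cone_closed s v hLI
  · rw [if_neg hLI]; exact isClosed_empty

/-- If `b` is not in the cone generated by the `w j`, there is a separating functional. -/
lemma cone_separation (w : ι → d → ℝ) (b : d → ℝ)
    (hb : ¬ ∃ l : ι → ℝ, (∀ j, 0 ≤ l j) ∧ b = ∑ j, l j • w j) :
    ∃ y : d → ℝ, (∀ j, 0 ≤ ∑ i, w j i * y i) ∧ ∑ i, b i * y i < 0 := by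
  classical
  set e := EuclideanSpace.equiv d ℝ with he
  set v : ι → EuclideanSpace ℝ d := fun j => e.symm (w j) with hv
  set C : Set (EuclideanSpace ℝ d) :=
    {x | ∃ l : ι → ℝ, (∀ j, 0 ≤ l j) ∧ x = ∑ j, l j • v j} with hC
  have hclosed : IsClosed C := fg_cone_closed v
  have hne : C.Nonempty := ⟨0, 0, by simp, by simp⟩
  have hsmul : ∀ (c : ℝ), 0 < c → ∀ x ∈ C, c • x ∈ C := by
    rintro c hc x ⟨l, hl, rfl⟩
    exact ⟨fun j => c * l j, fun j => mul_nonneg hc.le (hl j),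
      by rw [Finset.smul_sum]; simp [smul_smul]⟩
  have hadd : ∀ x ∈ C, ∀ y ∈ C, x + y ∈ C := by
    rintro x ⟨l, hl, rfl⟩ y ⟨l', hl', rfl⟩
    exact ⟨l + l', fun j => add_nonneg (hl j) (hl' j),
      by simp [add_smul, Finset.sum_add_distrib]⟩
  set K : ConvexCone ℝ (EuclideanSpace ℝ d) :=
    { carrier := C
      smul_mem' := fun {c} hc {x} hx => hsmul c hc x hx
      add_mem' := fun {x} hx {y} hy => hadd x hx y hy } with hK
  have hbK : e.symm b ∉ K := by
    rintro ⟨l, hl, hrep⟩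
    exact hb ⟨l, hl, by
      have : b = e (∑ j, l j • v j) := by rw [← hrep]; simp
      rw [this, map_sum]
      apply Finset.sum_congr rfl
      intro j _
      rw [map_smul, hv]
      simp⟩
  obtain ⟨y, hy1, hy2⟩ :=
    ProperCone.hyperplane_separation' (E := EuclideanSpace ℝ d)
      ⟨K.toPointedCone (by show (0 : EuclideanSpace ℝ d) ∈ C; exact ⟨0, by simp, by simp⟩), hclosed⟩ hbK
  refine ⟨e y, fun j => ?_, ?_⟩
  · have hvj : v j ∈ K := ⟨fun j' => if j' = j then 1 else 0, fun j' => by positivity, by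
      show v j = ∑ j' : ι, (if j' = j then (1:ℝ) else 0) • v j'
      rw [Finset.sum_eq_single j]
      · simp
      · intro b _ hb; simp [hb]
      · intro h; exact absurd (Finset.mem_univ j) h⟩
    have h := hy1 _ hvj
    rw [PiLp.inner_apply] at h
    simp only [RCLike.inner_apply, conj_trivial] at h
    exact h.trans_eq (Finset.sum_congr rfl fun i _ => mul_comm _ _)
  · have h := hy2
    rw [real_inner_comm, PiLp.inner_apply] at h
    simp only [RCLike.inner_apply, conj_trivial] at h
    calc ∑ i, b i * e y i = ∑ i, (e.symm b) i * y i := by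
          apply Finset.sum_congr rfl; intro i _; rfl
      _ < 0 := h

/-- Farkas' lemma: an infeasible finite system of linear inequalities admits a
nonnegative combination certifying infeasibility. -/
lemma farkas (a : ι → d → ℝ) (c : ι → ℝ)
    (h : ∀ x : d → ℝ, ∃ t, c t < ∑ i, a t i * x i) :
    ∃ l : ι → ℝ, (∀ t, 0 ≤ l t) ∧ (∀ i, ∑ t, l t * a t i = 0) ∧ ∑ t, l t * c t < 0 := by
  classical
  set w : Option ι → Option d → ℝ := fun j => Option.elim j
    (fun i => Option.elim i 1 (fun _ => 0))
    (fun t i => Option.elim i (c t) (fun i' => a t i')) with hw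
  set b : Option d → ℝ := fun i => Option.elim i (-1) (fun _ => 0) with hbdef
  by_cases hb : ∃ l : Option ι → ℝ, (∀ j, 0 ≤ l j) ∧ b = ∑ j, l j • w j
  · obtain ⟨l', hl', hrep⟩ := hb
    refine ⟨fun t => l' (some t), fun t => hl' (some t), ?_, ?_⟩
    · intro i
      have := congrFun hrep (some i)
      rw [Finset.sum_apply] at this
      simp only [Pi.smul_apply, smul_eq_mul] at this
      rw [Fintype.sum_option] at this
      simpa [hw, hbdef] using this.symm
    · have := congrFun hrep none
      rw [Finset.sum_apply] at this
      simp only [Pi.smul_apply, smul_eq_mul] at this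
      rw [Fintype.sum_option] at this
      simp only [hw, hbdef, Option.elim] at this
      have hnn := hl' none
      have : ∑ t, l' (some t) * c t = -1 - l' none * 1 := by linarith
      rw [this]
      linarith
  · obtain ⟨y, hy1, hy2⟩ := cone_separation w b hb
    have hs : 0 < y none := by
      have := hy2
      rw [Fintype.sum_option] at this
      simp [hbdef] at this
      linarith
    set x : d → ℝ := fun i => (-(y none)⁻¹) * y (some i) with hx
    obtain ⟨t, ht⟩ := h x
    have h1 := hy1 (some t)
    rw [Fintype.sum_option] at h1
    simp only [hw, Option.elim] at h1
    -- h1 : 0 ≤ c t * y none + ∑ i, a t i * y (some i)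
    have h2 : ∑ i, a t i * x i = (-(y none)⁻¹) * ∑ i, a t i * y (some i) := by
      rw [Finset.mul_sum]
      apply Finset.sum_congr rfl
      intro i _; ring
    have h3 : -(c t * y none) ≤ ∑ i, a t i * y (some i) := by linarith
    have h4 : ∑ i, a t i * x i ≤ c t := by
      rw [h2]
      have := mul_le_mul_of_nonneg_left h3 (le_of_lt (inv_pos.mpr hs))
      calc (-(y none)⁻¹) * ∑ i, a t i * y (some i)
          = -((y none)⁻¹ * ∑ i, a t i * y (some i)) := by ring
        _ ≤ -((y none)⁻¹ * (-(c t * y none))) := by linarith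
        _ = c t * ((y none)⁻¹ * y none) := by ring
        _ = c t := by rw [inv_mul_cancel₀ (ne_of_gt hs), mul_one]
    linarith

end Aux

/-- Theorem A.2: polyhedral separation on the probability hyperplane
X₁ = {x ∈ ℝⁿ : Σ x_i = 1}. -/
theorem polyhedral_separation (n k : ℕ) (hn : 1 ≤ n) (hk : 1 ≤ k)
    (A : Fin k → Set (Fin n → ℝ))
    (hne : ∀ i, (A i).Nonempty)
    (hsub : ∀ i, A i ⊆ {x : Fin n → ℝ | (∑ t, x t) = 1})
    (hpoly : ∀ i, IsPolyhedron (A i)) :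
    (⋂ i, A i) = ∅ ↔
      ∃ P : Fin k → Fin n → ℝ, (∑ i, P i) = 0 ∧
        ∀ i, ∀ x ∈ A i, 0 < ∑ t, P i t * x t := by
  classical
  constructor
  · -- forward direction
    intro hempty
    choose m a c hA using hpoly
    set ι := (i : Fin k) × Fin (m i) with hι
    set aa : ι → Fin n → ℝ := fun p => a p.1 p.2 with haa
    set cc : ι → ℝ := fun p => c p.1 p.2 with hcc
    have hinfeas : ∀ x : Fin n → ℝ, ∃ p : ι, cc p < ∑ u, aa p u * x u := by
      intro x
      have hx : x ∉ ⋂ i, A i := by rw [hempty]; exact Set.notMem_empty x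
      rw [Set.mem_iInter] at hx
      push_neg at hx
      obtain ⟨i, hi⟩ := hx
      rw [hA i] at hi
      simp only [Set.mem_setOf_eq] at hi
      push_neg at hi
      obtain ⟨t, ht⟩ := hi
      exact ⟨⟨i, t⟩, ht⟩
    obtain ⟨l, hl0, hlA, hlC⟩ := farkas aa cc hinfeas
    set S : ℝ := ∑ p, l p * cc p with hS
    set ε : ℝ := -S / k with hε
    have hk0 : (0:ℝ) < k := by exact_mod_cast hk
    have hε0 : 0 < ε := div_pos (by linarith) hk0
    refine ⟨fun i u => -(∑ t, l ⟨i, t⟩ * a i t u) + (∑ t, l ⟨i, t⟩ * c i t + ε), ?_, ?_⟩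
    · funext u
      rw [Finset.sum_apply]
      have e1 : ∑ i : Fin k, (-(∑ t, l ⟨i, t⟩ * a i t u) + (∑ t, l ⟨i, t⟩ * c i t + ε))
          = -(∑ i, ∑ t, l ⟨i, t⟩ * a i t u) + ((∑ i, ∑ t, l ⟨i, t⟩ * c i t) + k * ε) := by
        rw [Finset.sum_add_distrib, Finset.sum_add_distrib]
        rw [Finset.sum_const, Finset.card_univ, Fintype.card_fin, nsmul_eq_mul]
        rw [Finset.sum_neg_distrib]
      have e2 : ∑ i : Fin k, ∑ t, l ⟨i, t⟩ * a i t u = ∑ p : ι, l p * aa p u := by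
        rw [← Finset.univ_sigma_univ, Finset.sum_sigma]
      have e3 : ∑ i : Fin k, ∑ t, l ⟨i, t⟩ * c i t = S := by
        rw [hS, ← Finset.univ_sigma_univ, Finset.sum_sigma]
      have e4 : (k:ℝ) * ε = -S := by
        rw [hε]; field_simp
      rw [e1, e2, e3, e4, hlA u]
      simp
    · intro i x hx
      have hxsum : ∑ u, x u = 1 := hsub i hx
      have hxA : ∀ t, ∑ u, a i t u * x u ≤ c i t := by
        have := hx
        rw [hA i] at this
        exact this
      have key : ∑ u, (-(∑ t, l ⟨i, t⟩ * a i t u) + (∑ t, l ⟨i, t⟩ * c i t + ε)) * x u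
          = -(∑ t, l ⟨i, t⟩ * (∑ u, a i t u * x u)) + (∑ t, l ⟨i, t⟩ * c i t + ε) := by
        have : ∀ u, (-(∑ t, l ⟨i, t⟩ * a i t u) + (∑ t, l ⟨i, t⟩ * c i t + ε)) * x u
            = -(∑ t, l ⟨i, t⟩ * (a i t u * x u)) + (∑ t, l ⟨i, t⟩ * c i t + ε) * x u := by
          intro u
          have h1 : (∑ t, l ⟨i,t⟩ * a i t u) * x u = ∑ t, l ⟨i,t⟩ * (a i t u * x u) := by
            rw [Finset.sum_mul]; apply Finset.sum_congr rfl; intro t _; ring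
          rw [add_mul, neg_mul, h1]
        rw [Finset.sum_congr rfl (fun u _ => this u)]
        rw [Finset.sum_add_distrib, Finset.sum_neg_distrib]
        rw [← Finset.mul_sum, hxsum, mul_one]
        congr 1
        rw [Finset.sum_comm]
        congr 1
        apply Finset.sum_congr rfl
        intro t _
        rw [← Finset.mul_sum]
      rw [key]
      have hbound : ∑ t, l ⟨i, t⟩ * (∑ u, a i t u * x u) ≤ ∑ t, l ⟨i, t⟩ * c i t := by
        apply Finset.sum_le_sum
        intro t _
        exact mul_le_mul_of_nonneg_left (hxA t) (hl0 ⟨i, t⟩)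
      linarith
  · -- backward direction
    rintro ⟨P, hPsum, hPpos⟩
    rw [Set.eq_empty_iff_forall_notMem]
    intro x hx
    rw [Set.mem_iInter] at hx
    have hpos : 0 < ∑ i : Fin k, ∑ t, P i t * x t := by
      apply Finset.sum_pos
      · intro i _
        exact hPpos i x (hx i)
      · exact Finset.univ_nonempty_iff.mpr (by
          have : 0 < k := hk
          exact ⟨⟨0, this⟩⟩)
    have hzero : ∑ i : Fin k, ∑ t, P i t * x t = 0 := by
      rw [Finset.sum_comm]
      have : ∀ t, ∑ i : Fin k, P i t * x t = (∑ i : Fin k, P i) t * x t := by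
        intro t
        rw [Finset.sum_apply, Finset.sum_mul]
      rw [Finset.sum_congr rfl (fun t _ => this t), hPsum]
      simp
    linarith

end
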